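/- Let M = M* + E ∈ ℝ^{n₁×n₂} where M* has singular values σ₁* ≥ ⋯ ≥ σ_{n₁}* ≥ 0. Let U* ∈ ℝ^{n₁×r} (resp. U ∈ ℝ^{n₁×r}) be the matrix of top-r left singular vectors of M* (resp. M). If σ_r* − σ_{r+1}* > 2‖E‖, then ‖(UUᵀ − U*U*ᵀ) M*‖ ≤ 4σ_r*‖E‖ / (σ_r* − σ_{r+1}*). -/
import Mathlib


open Matrix BigOperators

/-- The spectral norm of a matrix, as the supremum of `‖M x‖₂` over unit vectors. -/
noncomputable def specNorm {m n : ℕ} (M : Matrix (Fin m) (Fin n) ℝ) : ℝ :=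
  sSup {t : ℝ | ∃ x : Fin n → ℝ, (∑ i, x i ^ 2) = 1 ∧
    t = Real.sqrt (∑ j, (M.mulVec x j) ^ 2)}

namespace SpecAux

noncomputable def en {n : ℕ} (x : Fin n → ℝ) : ℝ := Real.sqrt (∑ i, x i ^ 2)

lemma en_eq_norm {n : ℕ} (x : Fin n → ℝ) :
    en x = ‖(WithLp.equiv 2 (Fin n → ℝ)).symm x‖ := by
  simp [en, EuclideanSpace.norm_eq, Real.norm_eq_abs, sq_abs]

lemma en_nonneg {n : ℕ} (x : Fin n → ℝ) : 0 ≤ en x := Real.sqrt_nonneg _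

lemma en_sq {n : ℕ} (x : Fin n → ℝ) : en x ^ 2 = ∑ i, x i ^ 2 := by
  rw [en, Real.sq_sqrt]; positivity

lemma en_zero {n : ℕ} : en (0 : Fin n → ℝ) = 0 := by simp [en]

lemma en_eq_zero {n : ℕ} {x : Fin n → ℝ} (h : en x = 0) : x = 0 := by
  have h2 : ∑ i, x i ^ 2 = 0 := by
    have := en_sq x; rw [h] at this; linarith [this]
  funext i
  have := (Finset.sum_eq_zero_iff_of_nonneg (by intro j _; positivity)).1 h2 i (Finset.mem_univ i)
  have : x i ^ 2 = 0 := this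
  exact pow_eq_zero_iff (by norm_num) |>.1 this

lemma en_pos {n : ℕ} {x : Fin n → ℝ} (h : x ≠ 0) : 0 < en x := by
  rcases lt_or_eq_of_le (en_nonneg x) with h1 | h1
  · exact h1
  · exact absurd (en_eq_zero h1.symm) h

lemma en_smul {n : ℕ} (c : ℝ) (x : Fin n → ℝ) : en (c • x) = |c| * en x := by
  simp only [en, Pi.smul_apply, smul_eq_mul, mul_pow, ← Finset.mul_sum]
  rw [Real.sqrt_mul (by positivity), Real.sqrt_sq_eq_abs]

lemma en_add_le {n : ℕ} (x y : Fin n → ℝ) : en (x + y) ≤ en x + en y := by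
  rw [en_eq_norm, en_eq_norm, en_eq_norm]
  exact norm_add_le _ _

lemma en_neg {n : ℕ} (x : Fin n → ℝ) : en (-x) = en x := by simp [en]

lemma en_dot (n : ℕ) (x : Fin n → ℝ) : x ⬝ᵥ x = en x ^ 2 := by
  rw [en_sq]; simp [dotProduct, sq]

lemma dot_le_en_mul_en {n : ℕ} (x y : Fin n → ℝ) : x ⬝ᵥ y ≤ en x * en y := by
  have h := real_inner_le_norm ((WithLp.equiv 2 (Fin n → ℝ)).symm x)
    ((WithLp.equiv 2 (Fin n → ℝ)).symm y)
  rw [← en_eq_norm, ← en_eq_norm] at h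
  simpa [PiLp.inner_apply, RCLike.inner_apply, dotProduct, mul_comm] using h

end SpecAux

namespace SpecAux

lemma specSet_bddAbove {m n : ℕ} (M : Matrix (Fin m) (Fin n) ℝ) :
    BddAbove {t : ℝ | ∃ x : Fin n → ℝ, (∑ i, x i ^ 2) = 1 ∧
      t = Real.sqrt (∑ j, (M.mulVec x j) ^ 2)} := by
  refine ⟨Real.sqrt (∑ j, ∑ i, M j i ^ 2), ?_⟩
  rintro t ⟨x, hx, rfl⟩
  apply Real.sqrt_le_sqrt
  apply Finset.sum_le_sum
  intro j _
  have h : (M.mulVec x j) ^ 2 ≤ (∑ i, M j i ^ 2) * (∑ i, x i ^ 2) := by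
    simpa [Matrix.mulVec, dotProduct] using
      Finset.sum_mul_sq_le_sq_mul_sq Finset.univ (fun i => M j i) x
  rw [hx, mul_one] at h
  exact h

lemma specNorm_nonneg {m n : ℕ} (M : Matrix (Fin m) (Fin n) ℝ) : 0 ≤ specNorm M := by
  apply Real.sSup_nonneg
  rintro t ⟨x, hx, rfl⟩
  exact Real.sqrt_nonneg _

lemma en_mulVec_le {m n : ℕ} (M : Matrix (Fin m) (Fin n) ℝ) (x : Fin n → ℝ) :
    en (M *ᵥ x) ≤ specNorm M * en x := by
  by_cases hx : x = 0
  · simp [hx, Matrix.mulVec_zero, en_zero]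
  · have hpos := en_pos hx
    set c := en x with hc
    have hy : (∑ i, (c⁻¹ • x) i ^ 2) = 1 := by
      have := en_sq (c⁻¹ • x)
      rw [en_smul, abs_of_nonneg (by positivity)] at this
      rw [← this, inv_mul_cancel₀ (ne_of_gt hpos), one_pow]
    have hmem : en (M *ᵥ (c⁻¹ • x)) ∈ {t : ℝ | ∃ y : Fin n → ℝ, (∑ i, y i ^ 2) = 1 ∧
        t = Real.sqrt (∑ j, (M.mulVec y j) ^ 2)} := ⟨c⁻¹ • x, hy, rfl⟩
    have hle := le_csSup (specSet_bddAbove M) hmem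
    have heq : en (M *ᵥ (c⁻¹ • x)) = c⁻¹ * en (M *ᵥ x) := by
      rw [Matrix.mulVec_smul, en_smul, abs_of_nonneg (by positivity)]
    rw [heq] at hle
    calc en (M *ᵥ x) = c * (c⁻¹ * en (M *ᵥ x)) := by
            field_simp
      _ ≤ c * specNorm M := by
            apply mul_le_mul_of_nonneg_left hle (le_of_lt hpos)
      _ = specNorm M * c := mul_comm _ _

lemma specNorm_le {m n : ℕ} {M : Matrix (Fin m) (Fin n) ℝ} {c : ℝ} (hc : 0 ≤ c)
    (h : ∀ x : Fin n → ℝ, en (M *ᵥ x) ≤ c * en x) : specNorm M ≤ c := by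
  apply Real.sSup_le _ hc
  rintro t ⟨x, hx, rfl⟩
  have hex : en x = 1 := by rw [en, hx, Real.sqrt_one]
  have := h x
  rw [hex, mul_one] at this
  exact this

lemma specNorm_mul_le {m n p : ℕ} (A : Matrix (Fin m) (Fin n) ℝ) (B : Matrix (Fin n) (Fin p) ℝ) :
    specNorm (A * B) ≤ specNorm A * specNorm B := by
  apply specNorm_le (by have := specNorm_nonneg A; have := specNorm_nonneg B; positivity)
  intro x
  rw [← Matrix.mulVec_mulVec]
  calc en (A *ᵥ B *ᵥ x) ≤ specNorm A * en (B *ᵥ x) := en_mulVec_le _ _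
    _ ≤ specNorm A * (specNorm B * en x) :=
        mul_le_mul_of_nonneg_left (en_mulVec_le _ _) (specNorm_nonneg A)
    _ = specNorm A * specNorm B * en x := by ring

lemma specNorm_add_le {m n : ℕ} (A B : Matrix (Fin m) (Fin n) ℝ) :
    specNorm (A + B) ≤ specNorm A + specNorm B := by
  apply specNorm_le (by have := specNorm_nonneg A; have := specNorm_nonneg B; positivity)
  intro x
  rw [Matrix.add_mulVec]
  calc en (A *ᵥ x + B *ᵥ x) ≤ en (A *ᵥ x) + en (B *ᵥ x) := en_add_le _ _
    _ ≤ specNorm A * en x + specNorm B * en x := add_le_add (en_mulVec_le _ _) (en_mulVec_le _ _)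
    _ = (specNorm A + specNorm B) * en x := by ring

lemma specNorm_neg {m n : ℕ} (A : Matrix (Fin m) (Fin n) ℝ) : specNorm (-A) = specNorm A := by
  have : ∀ (B : Matrix (Fin m) (Fin n) ℝ), specNorm (-B) ≤ specNorm B := by
    intro B
    apply specNorm_le (specNorm_nonneg B)
    intro x
    rw [Matrix.neg_mulVec, en_neg]
    exact en_mulVec_le _ _
  have h1 := this A
  have h2 := this (-A)
  rw [neg_neg] at h2
  linarith

lemma specNorm_transpose {m n : ℕ} (A : Matrix (Fin m) (Fin n) ℝ) :
    specNorm Aᵀ = specNorm A := by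
  have key : ∀ {p q : ℕ} (B : Matrix (Fin p) (Fin q) ℝ), specNorm Bᵀ ≤ specNorm B := by
    intro p q B
    apply specNorm_le (specNorm_nonneg B)
    intro x
    set y := Bᵀ *ᵥ x with hy
    have h1 : en y ^ 2 = x ⬝ᵥ (B *ᵥ y) := by
      rw [← en_dot]
      conv_rhs => rw [Matrix.dotProduct_mulVec, ← Matrix.mulVec_transpose]
    have h2 : x ⬝ᵥ (B *ᵥ y) ≤ en x * (specNorm B * en y) := by
      calc x ⬝ᵥ (B *ᵥ y) ≤ en x * en (B *ᵥ y) := dot_le_en_mul_en _ _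
        _ ≤ en x * (specNorm B * en y) :=
            mul_le_mul_of_nonneg_left (en_mulVec_le _ _) (en_nonneg _)
    have h3 : en y ^ 2 ≤ specNorm B * en x * en y := by rw [h1]; nlinarith [h2]
    rcases eq_or_lt_of_le (en_nonneg y) with h4 | h4
    · rw [← h4]
      have := specNorm_nonneg B
      have := en_nonneg x
      positivity
    · nlinarith [h3]
  have h1 := key A
  have h2 := key Aᵀ
  rw [Matrix.transpose_transpose] at h2
  linarith

end SpecAux

namespace SpecAux

lemma en_eq_sqrt_dot {n : ℕ} (x : Fin n → ℝ) : en x = Real.sqrt (x ⬝ᵥ x) := by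
  rw [en]; congr 1; simp [dotProduct, sq]

lemma en_mulVec_orth {m n : ℕ} {Q : Matrix (Fin m) (Fin n) ℝ} (hQ : Qᵀ * Q = 1)
    (x : Fin n → ℝ) : en (Q *ᵥ x) = en x := by
  have key : (Q *ᵥ x) ⬝ᵥ (Q *ᵥ x) = x ⬝ᵥ x := by
    conv_lhs => rw [Matrix.dotProduct_mulVec, ← Matrix.mulVec_transpose,
      Matrix.mulVec_mulVec, hQ, Matrix.one_mulVec]
  rw [en_eq_sqrt_dot, en_eq_sqrt_dot, key]

lemma specNorm_orth_le {m n : ℕ} {Q : Matrix (Fin m) (Fin n) ℝ} (hQ : Qᵀ * Q = 1) :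
    specNorm Q ≤ 1 := by
  apply specNorm_le zero_le_one
  intro x
  rw [en_mulVec_orth hQ, one_mul]

lemma specNorm_orth_tr_le {m n : ℕ} {Q : Matrix (Fin m) (Fin n) ℝ} (hQ : Qᵀ * Q = 1) :
    specNorm Qᵀ ≤ 1 := by
  rw [specNorm_transpose]; exact specNorm_orth_le hQ

lemma specNorm_diagonal_le {n : ℕ} {d : Fin n → ℝ} {c : ℝ} (hc : 0 ≤ c)
    (h : ∀ i, |d i| ≤ c) : specNorm (Matrix.diagonal d) ≤ c := by
  apply specNorm_le hc
  intro x
  have h1 : ∀ j, (Matrix.diagonal d *ᵥ x) j ^ 2 ≤ c ^ 2 * x j ^ 2 := by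
    intro j
    rw [Matrix.mulVec_diagonal]
    have := h j
    have h2 : d j ^ 2 ≤ c ^ 2 := by nlinarith [abs_nonneg (d j), sq_abs (d j), abs_nonneg (d j)]
    nlinarith [sq_nonneg (x j)]
  rw [en, en]
  calc Real.sqrt (∑ j, (Matrix.diagonal d *ᵥ x) j ^ 2)
      ≤ Real.sqrt (∑ j, c ^ 2 * x j ^ 2) :=
        Real.sqrt_le_sqrt (Finset.sum_le_sum fun j _ => h1 j)
    _ = c * Real.sqrt (∑ j, x j ^ 2) := by
        rw [← Finset.mul_sum, Real.sqrt_mul (by positivity), Real.sqrt_sq hc]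

lemma specNorm_mul_diagonal_ge {m n : ℕ} (X : Matrix (Fin m) (Fin n) ℝ) {d : Fin n → ℝ}
    {c : ℝ} (hc : 0 < c) (h : ∀ i, c ≤ d i) :
    c * specNorm X ≤ specNorm (X * Matrix.diagonal d) := by
  have hX : X = X * Matrix.diagonal d * Matrix.diagonal (fun i => (d i)⁻¹) := by
    rw [Matrix.mul_assoc, Matrix.diagonal_mul_diagonal]
    have : (fun i => d i * (d i)⁻¹) = fun _ => (1 : ℝ) := by
      funext i
      exact mul_inv_cancel₀ (ne_of_gt (lt_of_lt_of_le hc (h i)))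
    rw [this, Matrix.diagonal_one, Matrix.mul_one]
  have h2 : specNorm X ≤ specNorm (X * Matrix.diagonal d) * c⁻¹ := by
    calc specNorm X = specNorm (X * Matrix.diagonal d * Matrix.diagonal (fun i => (d i)⁻¹)) := by
          rw [← hX]
      _ ≤ specNorm (X * Matrix.diagonal d) * specNorm (Matrix.diagonal (fun i => (d i)⁻¹)) :=
          specNorm_mul_le _ _
      _ ≤ specNorm (X * Matrix.diagonal d) * c⁻¹ := by
          apply mul_le_mul_of_nonneg_left _ (specNorm_nonneg _)
          apply specNorm_diagonal_le (by positivity)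
          intro i
          have hdi : 0 < d i := lt_of_lt_of_le hc (h i)
          rw [abs_of_nonneg (by positivity)]
          exact inv_anti₀ hc (h i)
  calc c * specNorm X ≤ c * (specNorm (X * Matrix.diagonal d) * c⁻¹) :=
        mul_le_mul_of_nonneg_left h2 (le_of_lt hc)
    _ = specNorm (X * Matrix.diagonal d) := by field_simp

end SpecAux

namespace SpecAux

lemma svd_matrix {n₁ n₂ : ℕ} (A : Matrix (Fin n₁) (Fin n₂) ℝ) (σa : Fin n₁ → ℝ)
    (ua : Matrix (Fin n₁) (Fin n₁) ℝ) (va : Matrix (Fin n₂) (Fin n₁) ℝ)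
    (hA : ∀ a b, A a b = ∑ i, σa i * ua a i * va b i) :
    A = ua * Matrix.diagonal σa * vaᵀ := by
  ext a b
  rw [hA, Matrix.mul_apply]
  apply Finset.sum_congr rfl
  intro i _
  rw [Matrix.mul_diagonal, Matrix.transpose_apply]
  ring

set_option maxHeartbeats 1000000 in
lemma weyl {n₁ n₂ : ℕ} (k : ℕ) (hk : k < n₁)
    (A B : Matrix (Fin n₁) (Fin n₂) ℝ) (σa σb : Fin n₁ → ℝ)
    (ua ub : Matrix (Fin n₁) (Fin n₁) ℝ) (va vb : Matrix (Fin n₂) (Fin n₁) ℝ)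
    (hua : uaᵀ * ua = 1) (hub : ubᵀ * ub = 1)
    (hva : vaᵀ * va = 1) (hvb : vbᵀ * vb = 1)
    (hσa_mono : ∀ i j : Fin n₁, i ≤ j → σa j ≤ σa i) (hσa_nonneg : ∀ i, 0 ≤ σa i)
    (hσb_mono : ∀ i j : Fin n₁, i ≤ j → σb j ≤ σb i) (hσb_nonneg : ∀ i, 0 ≤ σb i)
    (hA : ∀ a b, A a b = ∑ i, σa i * ua a i * va b i)
    (hB : ∀ a b, B a b = ∑ i, σb i * ub a i * vb b i) :
    σa ⟨k, hk⟩ ≤ σb ⟨k, hk⟩ + specNorm (A - B) := by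
  have hA' := svd_matrix A σa ua va hA
  have hB' := svd_matrix B σb ub vb hB
  set ψ : (Fin n₁ → ℝ) →ₗ[ℝ] (Fin (n₁ - (k+1)) → ℝ) :=
    LinearMap.funLeft ℝ ℝ (fun j => (⟨k + 1 + (j : ℕ), by omega⟩ : Fin n₁)) with hψ
  set W := LinearMap.ker ψ with hWdef
  set T₁ := Submodule.map va.mulVecLin W with hT₁def
  set φ : (Fin n₂ → ℝ) →ₗ[ℝ] (Fin k → ℝ) :=
    (LinearMap.funLeft ℝ ℝ (fun j : Fin k => (⟨(j : ℕ), by omega⟩ : Fin n₁))) ∘ₗ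
      (vbᵀ).mulVecLin with hφ
  set T₂ := LinearMap.ker φ with hT₂def
  -- dimension counts
  have hW : k + 1 ≤ Module.finrank ℝ W := by
    have h1 := LinearMap.finrank_range_add_finrank_ker ψ
    have h2 : Module.finrank ℝ (LinearMap.range ψ) ≤ n₁ - (k + 1) :=
      le_trans (Submodule.finrank_le _) (le_of_eq (Module.finrank_fin_fun ℝ))
    rw [Module.finrank_fin_fun] at h1
    rw [hWdef]
    omega
  have hT₁rank : k + 1 ≤ Module.finrank ℝ T₁ := by
    have hsub : W ≤ Submodule.map (vaᵀ).mulVecLin T₁ := by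
      intro w hw
      refine ⟨va *ᵥ w, ⟨w, hw, Matrix.mulVecLin_apply _ _⟩, ?_⟩
      rw [Matrix.mulVecLin_apply, Matrix.mulVec_mulVec, hva, Matrix.one_mulVec]
    calc k + 1 ≤ Module.finrank ℝ W := hW
      _ ≤ Module.finrank ℝ (Submodule.map (vaᵀ).mulVecLin T₁) := Submodule.finrank_mono hsub
      _ ≤ Module.finrank ℝ T₁ := Submodule.finrank_map_le _ _
  have hT₂rank : n₂ - k ≤ Module.finrank ℝ T₂ := by
    have h1 := LinearMap.finrank_range_add_finrank_ker φ
    have h2 : Module.finrank ℝ (LinearMap.range φ) ≤ k :=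
      le_trans (Submodule.finrank_le _) (le_of_eq (Module.finrank_fin_fun ℝ))
    rw [Module.finrank_fin_fun] at h1
    rw [hT₂def]
    omega
  have hT₁le : Module.finrank ℝ T₁ ≤ n₂ :=
    le_trans (Submodule.finrank_le _) (le_of_eq (Module.finrank_fin_fun ℝ))
  have hsum := Submodule.finrank_sup_add_finrank_inf_eq T₁ T₂
  have hsup : Module.finrank ℝ ↥(T₁ ⊔ T₂) ≤ n₂ :=
    le_trans (Submodule.finrank_le _) (le_of_eq (Module.finrank_fin_fun ℝ))
  have hinf : 1 ≤ Module.finrank ℝ ↥(T₁ ⊓ T₂) := by omega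
  have hne : T₁ ⊓ T₂ ≠ ⊥ := by
    intro hbot
    rw [hbot] at hinf
    simp [finrank_bot] at hinf
  obtain ⟨x, hx, hx0⟩ := (Submodule.ne_bot_iff _).1 hne
  rw [Submodule.mem_inf] at hx
  obtain ⟨hx1, hx2⟩ := hx
  obtain ⟨w, hwW, hwx⟩ := hx1
  rw [Matrix.mulVecLin_apply] at hwx
  -- tail of w vanishes
  have hwtail : ∀ i : Fin n₁, k < (i : ℕ) → w i = 0 := by
    intro i hi
    have hiv : (i : ℕ) - (k + 1) < n₁ - (k + 1) := by omega
    have := congrFun (LinearMap.mem_ker.1 hwW) ⟨(i : ℕ) - (k + 1), hiv⟩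
    rw [hψ] at this
    simpa [LinearMap.funLeft_apply, show (⟨k + 1 + ((i : ℕ) - (k + 1)), by omega⟩ : Fin n₁) = i
      from Fin.ext (by simp; omega)] using this
  -- vaᵀ x = w
  have hvax : vaᵀ *ᵥ x = w := by
    rw [← hwx, Matrix.mulVec_mulVec, hva, Matrix.one_mulVec]
  have henx : en x = en w := by rw [← hwx, en_mulVec_orth hva]
  have hexpos : 0 < en x := en_pos hx0
  -- lower bound : σa k * en x ≤ en (A *ᵥ x)
  have hlow : σa ⟨k, hk⟩ * en x ≤ en (A *ᵥ x) := by
    have hAx : A *ᵥ x = ua *ᵥ (Matrix.diagonal σa *ᵥ w) := by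
      rw [hA', ← Matrix.mulVec_mulVec, ← Matrix.mulVec_mulVec, hvax]
    rw [hAx, en_mulVec_orth hua]
    have hterm : ∀ i : Fin n₁, σa ⟨k, hk⟩ ^ 2 * w i ^ 2 ≤ (Matrix.diagonal σa *ᵥ w) i ^ 2 := by
      intro i
      rw [Matrix.mulVec_diagonal]
      by_cases hik : k < (i : ℕ)
      · rw [hwtail i hik]; simp
      · have hle : σa ⟨k, hk⟩ ≤ σa i := hσa_mono i ⟨k, hk⟩ (by simp [Fin.le_def]; omega)
        have h0 : 0 ≤ σa ⟨k, hk⟩ := hσa_nonneg _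
        have hsq : σa ⟨k, hk⟩ ^ 2 ≤ σa i ^ 2 := by nlinarith
        nlinarith [mul_nonneg (sub_nonneg.2 hsq) (sq_nonneg (w i))]
    calc σa ⟨k, hk⟩ * en x = Real.sqrt (σa ⟨k, hk⟩ ^ 2 * ∑ i, w i ^ 2) := by
          rw [Real.sqrt_mul (by positivity), Real.sqrt_sq (hσa_nonneg _), henx, en]
      _ ≤ Real.sqrt (∑ i, (Matrix.diagonal σa *ᵥ w) i ^ 2) := by
          apply Real.sqrt_le_sqrt
          rw [Finset.mul_sum]
          exact Finset.sum_le_sum fun i _ => hterm i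
      _ = en (Matrix.diagonal σa *ᵥ w) := rfl
  -- upper bound : en (B *ᵥ x) ≤ σb k * en x
  have hupp : en (B *ᵥ x) ≤ σb ⟨k, hk⟩ * en x := by
    set z := vbᵀ *ᵥ x with hz
    have hzhead : ∀ i : Fin n₁, (i : ℕ) < k → z i = 0 := by
      intro i hi
      have h := congrFun (LinearMap.mem_ker.1 hx2) ⟨(i : ℕ), hi⟩
      rw [hφ] at h
      rw [hz, Matrix.mulVec_transpose]
      simpa using h
    have hBx : B *ᵥ x = ub *ᵥ (Matrix.diagonal σb *ᵥ z) := by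
      rw [hB', ← Matrix.mulVec_mulVec, ← Matrix.mulVec_mulVec]
    rw [hBx, en_mulVec_orth hub]
    have hterm : ∀ i : Fin n₁, (Matrix.diagonal σb *ᵥ z) i ^ 2 ≤ σb ⟨k, hk⟩ ^ 2 * z i ^ 2 := by
      intro i
      rw [Matrix.mulVec_diagonal]
      by_cases hik : (i : ℕ) < k
      · rw [hzhead i hik]; simp
      · have hle : σb i ≤ σb ⟨k, hk⟩ := hσb_mono ⟨k, hk⟩ i (by simp [Fin.le_def]; omega)
        have h0 : 0 ≤ σb i := hσb_nonneg _
        have hsq : σb i ^ 2 ≤ σb ⟨k, hk⟩ ^ 2 := by nlinarith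
        nlinarith [mul_nonneg (sub_nonneg.2 hsq) (sq_nonneg (z i))]
    have hzx : en z ≤ en x := by
      calc en z ≤ specNorm vbᵀ * en x := en_mulVec_le _ _
        _ ≤ 1 * en x := mul_le_mul_of_nonneg_right (specNorm_orth_tr_le hvb) (en_nonneg _)
        _ = en x := one_mul _
    calc en (Matrix.diagonal σb *ᵥ z)
        ≤ Real.sqrt (σb ⟨k, hk⟩ ^ 2 * ∑ i, z i ^ 2) := by
          rw [en, Finset.mul_sum]
          exact Real.sqrt_le_sqrt (Finset.sum_le_sum fun i _ => hterm i)
      _ = σb ⟨k, hk⟩ * en z := by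
          rw [Real.sqrt_mul (by positivity), Real.sqrt_sq (hσb_nonneg _), en]
      _ ≤ σb ⟨k, hk⟩ * en x := mul_le_mul_of_nonneg_left hzx (hσb_nonneg _)
  -- combine
  have hsplit : A *ᵥ x = B *ᵥ x + (A - B) *ᵥ x := by
    rw [Matrix.sub_mulVec]; abel
  have hcomb : σa ⟨k, hk⟩ * en x ≤ (σb ⟨k, hk⟩ + specNorm (A - B)) * en x := by
    calc σa ⟨k, hk⟩ * en x ≤ en (A *ᵥ x) := hlow
      _ = en (B *ᵥ x + (A - B) *ᵥ x) := by rw [← hsplit]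
      _ ≤ en (B *ᵥ x) + en ((A - B) *ᵥ x) := en_add_le _ _
      _ ≤ σb ⟨k, hk⟩ * en x + specNorm (A - B) * en x := add_le_add hupp (en_mulVec_le _ _)
      _ = (σb ⟨k, hk⟩ + specNorm (A - B)) * en x := by ring
  exact le_of_mul_le_mul_right hcomb hexpos

end SpecAux

namespace SpecAux

def tailIdx {n₁ : ℕ} (r : ℕ) (j : Fin (n₁ - r)) : Fin n₁ :=
  ⟨r + (j : ℕ), by have := j.isLt; omega⟩

lemma tailIdx_injective {n₁ r : ℕ} : Function.Injective (tailIdx (n₁ := n₁) r) := by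
  intro a b hab
  have : r + (a : ℕ) = r + (b : ℕ) := congrArg Fin.val hab
  exact Fin.ext (by omega)

lemma castLE_ne_tailIdx {n₁ r : ℕ} (hr : r ≤ n₁) (l : Fin r) (j : Fin (n₁ - r)) :
    Fin.castLE hr l ≠ tailIdx r j := by
  intro h
  have : (l : ℕ) = r + (j : ℕ) := congrArg Fin.val h
  have := l.isLt
  omega

lemma sum_split {n₁ : ℕ} (r : ℕ) (hr : r ≤ n₁) (f : Fin n₁ → ℝ) :
    ∑ i, f i = (∑ l : Fin r, f (Fin.castLE hr l)) + ∑ j : Fin (n₁ - r), f (tailIdx r j) := by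
  have h : r + (n₁ - r) = n₁ := by omega
  have h2 := Fintype.sum_equiv (finCongr h) (fun i => f (finCongr h i)) f (fun i => rfl)
  rw [← h2, Fin.sum_univ_add]
  have e1 : ∀ l : Fin r, (finCongr h) (Fin.castAdd (n₁ - r) l) = Fin.castLE hr l :=
    fun l => Fin.ext (by simp)
  have e2 : ∀ j : Fin (n₁ - r), (finCongr h) (Fin.natAdd r j) = tailIdx r j :=
    fun j => Fin.ext (by simp [tailIdx])
  exact congrArg₂ (· + ·) (Finset.sum_congr rfl fun l _ => congrArg f (e1 l))
    (Finset.sum_congr rfl fun j _ => congrArg f (e2 j))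

lemma subcol_orthonormal {m n₁ p : ℕ} {w : Matrix (Fin m) (Fin n₁) ℝ} (hw : wᵀ * w = 1)
    (f : Fin p → Fin n₁) (hf : Function.Injective f) :
    (w.submatrix id f)ᵀ * (w.submatrix id f) = 1 := by
  ext a b
  have h : (wᵀ * w) (f a) (f b) = (1 : Matrix (Fin n₁) (Fin n₁) ℝ) (f a) (f b) := by rw [hw]
  rw [Matrix.mul_apply] at h
  rw [Matrix.mul_apply]
  simp only [Matrix.transpose_apply, Matrix.submatrix_apply, id_eq]
  simp only [Matrix.transpose_apply] at h
  rw [h, Matrix.one_apply, Matrix.one_apply]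
  by_cases hab : a = b
  · simp [hab]
  · simp [hab, hf.ne hab]

lemma subcol_zero {m n₁ p q : ℕ} {w : Matrix (Fin m) (Fin n₁) ℝ} (hw : wᵀ * w = 1)
    (f : Fin p → Fin n₁) (g : Fin q → Fin n₁) (hfg : ∀ a b, f a ≠ g b) :
    (w.submatrix id f)ᵀ * (w.submatrix id g) = 0 := by
  ext a b
  have h : (wᵀ * w) (f a) (g b) = (1 : Matrix (Fin n₁) (Fin n₁) ℝ) (f a) (g b) := by rw [hw]
  rw [Matrix.mul_apply] at h
  rw [Matrix.mul_apply]
  simp only [Matrix.transpose_apply, Matrix.submatrix_apply, id_eq]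
  simp only [Matrix.transpose_apply] at h
  rw [h, Matrix.one_apply]
  simp [hfg a b]

lemma subcol_complete {n₁ r : ℕ} (hr : r ≤ n₁) {w : Matrix (Fin n₁) (Fin n₁) ℝ}
    (hw : wᵀ * w = 1) :
    (w.submatrix id (Fin.castLE hr)) * (w.submatrix id (Fin.castLE hr))ᵀ
      + (w.submatrix id (tailIdx r)) * (w.submatrix id (tailIdx r))ᵀ = 1 := by
  have hww : w * wᵀ = 1 := mul_eq_one_comm.1 hw
  ext a b
  have h : (w * wᵀ) a b = (1 : Matrix (Fin n₁) (Fin n₁) ℝ) a b := by rw [hww]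
  rw [Matrix.mul_apply] at h
  simp only [Matrix.transpose_apply] at h
  rw [Matrix.add_apply, Matrix.mul_apply, Matrix.mul_apply]
  simp only [Matrix.transpose_apply, Matrix.submatrix_apply, id_eq]
  rw [← h, sum_split r hr (fun i => w a i * w b i)]

lemma matrix_split {n₁ n₂ r : ℕ} (hr : r ≤ n₁) (A : Matrix (Fin n₁) (Fin n₂) ℝ)
    (τ : Fin n₁ → ℝ) (w : Matrix (Fin n₁) (Fin n₁) ℝ) (y : Matrix (Fin n₂) (Fin n₁) ℝ)
    (hA : ∀ a b, A a b = ∑ i, τ i * w a i * y b i) :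
    A = (w.submatrix id (Fin.castLE hr)) * Matrix.diagonal (fun l => τ (Fin.castLE hr l))
          * (y.submatrix id (Fin.castLE hr))ᵀ
        + (w.submatrix id (tailIdx r)) * Matrix.diagonal (fun j => τ (tailIdx r j))
          * (y.submatrix id (tailIdx r))ᵀ := by
  ext a b
  rw [Matrix.add_apply, hA, sum_split r hr]
  congr 1
  · rw [Matrix.mul_apply]
    apply Finset.sum_congr rfl
    intro l _
    rw [Matrix.mul_diagonal]
    simp only [Matrix.transpose_apply, Matrix.submatrix_apply, id_eq]
    ring
  · rw [Matrix.mul_apply]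
    apply Finset.sum_congr rfl
    intro j _
    rw [Matrix.mul_diagonal]
    simp only [Matrix.transpose_apply, Matrix.submatrix_apply, id_eq]
    ring

lemma specNorm_sub_le {m n : ℕ} (A B : Matrix (Fin m) (Fin n) ℝ) :
    specNorm (A - B) ≤ specNorm A + specNorm B := by
  rw [sub_eq_add_neg]
  calc specNorm (A + -B) ≤ specNorm A + specNorm (-B) := specNorm_add_le _ _
    _ = specNorm A + specNorm B := by rw [specNorm_neg]

end SpecAux

namespace SpecAux

lemma specNorm_mul_le_of_le {m n p : ℕ} {A : Matrix (Fin m) (Fin n) ℝ}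
    {B : Matrix (Fin n) (Fin p) ℝ} {c d : ℝ} (hA : specNorm A ≤ c) (hB : specNorm B ≤ d)
    (hd : 0 ≤ d) : specNorm (A * B) ≤ c * d := by
  calc specNorm (A * B) ≤ specNorm A * specNorm B := specNorm_mul_le _ _
    _ ≤ c * d := mul_le_mul hA hB (specNorm_nonneg _) (le_trans (specNorm_nonneg _) hA)

lemma sandwich_le {p m n q : ℕ} (P : Matrix (Fin p) (Fin m) ℝ) (F : Matrix (Fin m) (Fin n) ℝ)
    (Q : Matrix (Fin n) (Fin q) ℝ) (hP : specNorm P ≤ 1) (hQ : specNorm Q ≤ 1) :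
    specNorm (P * F * Q) ≤ specNorm F := by
  have h1 : specNorm (P * F) ≤ 1 * specNorm F :=
    specNorm_mul_le_of_le hP le_rfl (specNorm_nonneg _)
  have h2 : specNorm (P * F * Q) ≤ specNorm (P * F) * 1 := by
    calc specNorm (P * F * Q) ≤ specNorm (P * F) * specNorm Q := specNorm_mul_le _ _
      _ ≤ specNorm (P * F) * 1 := mul_le_mul_of_nonneg_left hQ (specNorm_nonneg _)
  calc specNorm (P * F * Q) ≤ specNorm (P * F) * 1 := h2
    _ = specNorm (P * F) := mul_one _
    _ ≤ 1 * specNorm F := h1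
    _ = specNorm F := one_mul _

lemma split_mul_right {p q r1 r2 : ℕ} {X : Matrix (Fin p) (Fin q) ℝ}
    {W1 : Matrix (Fin p) (Fin r1) ℝ} {G1 : Matrix (Fin r1) (Fin r1) ℝ}
    {Y1 : Matrix (Fin q) (Fin r1) ℝ}
    {W2 : Matrix (Fin p) (Fin r2) ℝ} {G2 : Matrix (Fin r2) (Fin r2) ℝ}
    {Y2 : Matrix (Fin q) (Fin r2) ℝ}
    (hX : X = W1 * G1 * Y1ᵀ + W2 * G2 * Y2ᵀ)
    (h11 : Y1ᵀ * Y1 = 1) (h21 : Y2ᵀ * Y1 = 0) :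
    X * Y1 = W1 * G1 := by
  rw [hX, Matrix.add_mul, Matrix.mul_assoc (W1 * G1), Matrix.mul_assoc (W2 * G2), h11, h21,
    Matrix.mul_one, Matrix.mul_zero, add_zero]

lemma split_mul_left {p q r1 r2 : ℕ} {X : Matrix (Fin p) (Fin q) ℝ}
    {W1 : Matrix (Fin p) (Fin r1) ℝ} {G1 : Matrix (Fin r1) (Fin r1) ℝ}
    {Y1 : Matrix (Fin q) (Fin r1) ℝ}
    {W2 : Matrix (Fin p) (Fin r2) ℝ} {G2 : Matrix (Fin r2) (Fin r2) ℝ}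
    {Y2 : Matrix (Fin q) (Fin r2) ℝ}
    (hX : X = W1 * G1 * Y1ᵀ + W2 * G2 * Y2ᵀ)
    (h11 : W1ᵀ * W1 = 1) (h12 : W1ᵀ * W2 = 0) :
    W1ᵀ * X = G1 * Y1ᵀ := by
  rw [hX, Matrix.mul_add]
  rw [show W1ᵀ * (W1 * G1 * Y1ᵀ) = (W1ᵀ * W1) * G1 * Y1ᵀ by
    rw [Matrix.mul_assoc (W1ᵀ * W1), Matrix.mul_assoc W1, ← Matrix.mul_assoc W1ᵀ]]
  rw [show W1ᵀ * (W2 * G2 * Y2ᵀ) = (W1ᵀ * W2) * G2 * Y2ᵀ by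
    rw [Matrix.mul_assoc (W1ᵀ * W2), Matrix.mul_assoc W2, ← Matrix.mul_assoc W1ᵀ]]
  rw [h11, h12, Matrix.one_mul, Matrix.zero_mul, Matrix.zero_mul, add_zero]

lemma complete_split {p q r1 r2 : ℕ}
    {W1 : Matrix (Fin p) (Fin r1) ℝ} {W2 : Matrix (Fin p) (Fin r2) ℝ}
    (hcomp : W1 * W1ᵀ + W2 * W2ᵀ = 1) (X : Matrix (Fin p) (Fin q) ℝ) :
    X = W1 * (W1ᵀ * X) + W2 * (W2ᵀ * X) := by
  conv_lhs => rw [← Matrix.one_mul X, ← hcomp]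
  rw [Matrix.add_mul, Matrix.mul_assoc, Matrix.mul_assoc]

end SpecAux

namespace SpecAux

lemma resolve_system {s t x y e : ℝ} (h1 : s * x ≤ t * y + e) (h2 : s * y ≤ t * x + e)
    (hx : 0 ≤ x) (hy : 0 ≤ y) (ht : 0 ≤ t) (hlt : t < s) : (s - t) * y ≤ e := by
  have hs : 0 < s := lt_of_le_of_lt ht hlt
  have h5 : (s * s - t * t) * y ≤ (s + t) * e := by
    nlinarith [mul_le_mul_of_nonneg_left h2 (le_of_lt hs), mul_le_mul_of_nonneg_left h1 ht]
  nlinarith [h5]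

lemma final_scalar {s1 s2 t1 t2 a' b e N : ℝ}
    (he0 : 0 ≤ e) (hs2 : 0 ≤ s2) (ht2 : 0 ≤ t2) (ha' : 0 ≤ a') (hb : 0 ≤ b)
    (hgap : 2 * e < s1 - s2) (hw1 : t2 ≤ s2 + e) (hw2 : s1 ≤ t1 + e)
    (hbkey : (s1 - t2) * b ≤ e) (hakey : (t1 - s2) * a' ≤ e)
    (hN : N ≤ a' * s2 + (t2 * b + e)) :
    N ≤ 4 * s1 * e / (s1 - s2) := by
  have hδpos : (0 : ℝ) < s1 - s2 := by linarith
  rw [le_div_iff₀ hδpos]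
  have hbd : b * (s1 - s2) ≤ 2 * e := by
    have h2st : 0 ≤ 2 * (s1 - t2) - (s1 - s2) := by linarith
    nlinarith [mul_nonneg hb h2st]
  have had : a' * (s1 - s2) ≤ 2 * e := by
    have h2st : 0 ≤ 2 * (t1 - s2) - (s1 - s2) := by linarith
    nlinarith [mul_nonneg ha' h2st]
  have hexp : (a' * s2 + (t2 * b + e)) * (s1 - s2) ≤ 4 * s1 * e := by
    nlinarith [mul_le_mul_of_nonneg_right had hs2,
      mul_le_mul_of_nonneg_left hbd ht2,
      mul_nonneg he0 (by linarith : (0:ℝ) ≤ 3 * (s1 - s2) - 2 * e),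
      mul_nonneg hb he0]
  nlinarith [mul_le_mul_of_nonneg_right hN (le_of_lt hδpos)]

end SpecAux

open SpecAux
set_option maxHeartbeats 2000000

/-- Let `M = M* + E ∈ ℝ^{n₁×n₂}` with full SVDs
`M* = Σ_i σ*_i u*_i v*_iᵀ` and `M = Σ_i σ_i u_i v_iᵀ` (singular values in decreasing
order, `u*, u` having orthonormal columns, `v*, v` having orthonormal columns), and let
`U*` (resp. `U`) collect the top-`r` left singular vectors of `M*` (resp. `M`).
If `σ*_r − σ*_{r+1} > 2‖E‖`, then
`‖(UUᵀ − U*U*ᵀ) M*‖ ≤ 4 σ*_r ‖E‖ / (σ*_r − σ*_{r+1})`. -/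
theorem projected_subspace_perturbation
    (n₁ n₂ r : ℕ) (hr0 : 0 < r) (hr : r < n₁)
    (Ms E : Matrix (Fin n₁) (Fin n₂) ℝ)
    (σs σ : Fin n₁ → ℝ)
    (us u : Matrix (Fin n₁) (Fin n₁) ℝ)
    (vs v : Matrix (Fin n₂) (Fin n₁) ℝ)
    (hus : usᵀ * us = 1) (hu : uᵀ * u = 1)
    (hvs : vsᵀ * vs = 1) (hv : vᵀ * v = 1)
    (hσs_mono : ∀ i j : Fin n₁, i ≤ j → σs j ≤ σs i)
    (hσs_nonneg : ∀ i, 0 ≤ σs i)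
    (hσ_mono : ∀ i j : Fin n₁, i ≤ j → σ j ≤ σ i)
    (hσ_nonneg : ∀ i, 0 ≤ σ i)
    (hMs : ∀ a b, Ms a b = ∑ i, σs i * us a i * vs b i)
    (hM : ∀ a b, Ms a b + E a b = ∑ i, σ i * u a i * v b i)
    (hgap : 2 * specNorm E < σs ⟨r - 1, by omega⟩ - σs ⟨r, hr⟩) :
    specNorm
      ((Matrix.of fun a b : Fin n₁ =>
          (∑ l : Fin r, u a (Fin.castLE hr.le l) * u b (Fin.castLE hr.le l))
            - ∑ l : Fin r, us a (Fin.castLE hr.le l) * us b (Fin.castLE hr.le l)) * Ms)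
      ≤ 4 * σs ⟨r - 1, by omega⟩ * specNorm E
          / (σs ⟨r - 1, by omega⟩ - σs ⟨r, hr⟩) := by
  have hr1 : r - 1 < n₁ := by omega
  set M : Matrix (Fin n₁) (Fin n₂) ℝ := Ms + E with hMdef
  have hM' : ∀ a b, M a b = ∑ i, σ i * u a i * v b i := by
    intro a b; rw [hMdef, Matrix.add_apply, hM]
  -- abbreviations
  set e := specNorm E with he
  have he0 : 0 ≤ e := specNorm_nonneg E
  set s1 := σs ⟨r - 1, hr1⟩ with hs1def
  set s2 := σs ⟨r, hr⟩ with hs2def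
  set t1 := σ ⟨r - 1, hr1⟩ with ht1def
  set t2 := σ ⟨r, hr⟩ with ht2def
  have hgap' : 2 * e < s1 - s2 := hgap
  have hs2nn : 0 ≤ s2 := hσs_nonneg _
  have ht2nn : 0 ≤ t2 := hσ_nonneg _
  have hs1pos : 0 < s1 := by linarith
  -- splits
  have hMs_split := matrix_split hr.le Ms σs us vs hMs
  have hM_split := matrix_split hr.le M σ u v hM'
  -- block orthonormality
  have hcinj : Function.Injective (Fin.castLE hr.le) := fun a b h => by
    have : ((Fin.castLE hr.le a) : ℕ) = ((Fin.castLE hr.le b) : ℕ) := congrArg Fin.val h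
    exact Fin.ext this
  have hct : ∀ (a : Fin r) (b : Fin (n₁ - r)), Fin.castLE hr.le a ≠ tailIdx r b :=
    castLE_ne_tailIdx hr.le
  have htc : ∀ (a : Fin (n₁ - r)) (b : Fin r), tailIdx r a ≠ Fin.castLE hr.le b :=
    fun a b h => (castLE_ne_tailIdx hr.le b a h.symm)
  have hUs1o := subcol_orthonormal hus (Fin.castLE hr.le) hcinj
  have hUs2o := subcol_orthonormal hus (tailIdx r) tailIdx_injective
  have hU1o := subcol_orthonormal hu (Fin.castLE hr.le) hcinj
  have hU2o := subcol_orthonormal hu (tailIdx r) tailIdx_injective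
  have hVs1o := subcol_orthonormal hvs (Fin.castLE hr.le) hcinj
  have hVs2o := subcol_orthonormal hvs (tailIdx r) tailIdx_injective
  have hV1o := subcol_orthonormal hv (Fin.castLE hr.le) hcinj
  have hV2o := subcol_orthonormal hv (tailIdx r) tailIdx_injective
  have hUs12 := subcol_zero hus (Fin.castLE hr.le) (tailIdx r) hct
  have hUs21 := subcol_zero hus (tailIdx r) (Fin.castLE hr.le) htc
  have hU12 := subcol_zero hu (Fin.castLE hr.le) (tailIdx r) hct
  have hU21 := subcol_zero hu (tailIdx r) (Fin.castLE hr.le) htc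
  have hVs12 := subcol_zero hvs (Fin.castLE hr.le) (tailIdx r) hct
  have hVs21 := subcol_zero hvs (tailIdx r) (Fin.castLE hr.le) htc
  have hV12 := subcol_zero hv (Fin.castLE hr.le) (tailIdx r) hct
  have hV21 := subcol_zero hv (tailIdx r) (Fin.castLE hr.le) htc
  have hUcomp := subcol_complete hr.le hu
  have hUscomp := subcol_complete hr.le hus
  -- names for blocks
  set Us1 := us.submatrix id (Fin.castLE hr.le) with hUs1def
  set Us2 := us.submatrix id (tailIdx r) with hUs2def
  set U1 := u.submatrix id (Fin.castLE hr.le) with hU1def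
  set U2 := u.submatrix id (tailIdx r) with hU2def
  set Vs1 := vs.submatrix id (Fin.castLE hr.le) with hVs1def
  set Vs2 := vs.submatrix id (tailIdx r) with hVs2def
  set V1 := v.submatrix id (Fin.castLE hr.le) with hV1def
  set V2 := v.submatrix id (tailIdx r) with hV2def
  set Ds1 := Matrix.diagonal (fun l : Fin r => σs (Fin.castLE hr.le l)) with hDs1def
  set Ds2 := Matrix.diagonal (fun j : Fin (n₁ - r) => σs (tailIdx r j)) with hDs2def
  set D1 := Matrix.diagonal (fun l : Fin r => σ (Fin.castLE hr.le l)) with hD1def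
  set D2 := Matrix.diagonal (fun j : Fin (n₁ - r) => σ (tailIdx r j)) with hD2def
  -- key products
  have hMsVs1 : Ms * Vs1 = Us1 * Ds1 := split_mul_right hMs_split hVs1o hVs21
  have hMsVs2 : Ms * Vs2 = Us2 * Ds2 := by
    refine split_mul_right (X := Ms) (W1 := Us2) (G1 := Ds2) (Y1 := Vs2) (W2 := Us1)
      (G2 := Ds1) (Y2 := Vs1) ?_ hVs2o hVs12
    rw [hMs_split, add_comm]
  have hUs1Ms : Us1ᵀ * Ms = Ds1 * Vs1ᵀ := split_mul_left hMs_split hUs1o hUs12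
  have hUs2Ms : Us2ᵀ * Ms = Ds2 * Vs2ᵀ := by
    refine split_mul_left (X := Ms) (W1 := Us2) (G1 := Ds2) (Y1 := Vs2) (W2 := Us1)
      (G2 := Ds1) (Y2 := Vs1) ?_ hUs2o hUs21
    rw [hMs_split, add_comm]
  have hU1M : U1ᵀ * M = D1 * V1ᵀ := split_mul_left hM_split hU1o hU12
  have hU2M : U2ᵀ * M = D2 * V2ᵀ := by
    refine split_mul_left (X := M) (W1 := U2) (G1 := D2) (Y1 := V2) (W2 := U1)
      (G2 := D1) (Y2 := V1) ?_ hU2o hU21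
    rw [hM_split, add_comm]
  have hMV1 : M * V1 = U1 * D1 := split_mul_right hM_split hV1o hV21
  have hMV2 : M * V2 = U2 * D2 := by
    refine split_mul_right (X := M) (W1 := U2) (G1 := D2) (Y1 := V2) (W2 := U1)
      (G2 := D1) (Y2 := V1) ?_ hV2o hV12
    rw [hM_split, add_comm]
  -- Weyl's inequalities
  have hMminusMs : M - Ms = E := by rw [hMdef]; abel
  have hMsE : Ms = M - E := by rw [hMdef]; abel
  have hMstE : Msᵀ = Mᵀ - Eᵀ := by rw [hMdef, Matrix.transpose_add]; abel
  have hMsminusM : Ms - M = -E := by rw [hMdef]; abel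
  have hw1 : t2 ≤ s2 + e := by
    have := weyl r hr M Ms σ σs u us v vs hu hus hv hvs hσ_mono hσ_nonneg hσs_mono
      hσs_nonneg hM' hMs
    rw [hMminusMs] at this
    exact this
  have hw2 : s1 ≤ t1 + e := by
    have := weyl (r - 1) hr1 Ms M σs σ us u vs v hus hu hvs hv hσs_mono hσs_nonneg hσ_mono
      hσ_nonneg hMs hM'
    rw [hMsminusM, specNorm_neg] at this
    exact this
  have ht1pos : 0 < t1 := by linarith
  -- diagonal norm bounds
  have hDs2n : specNorm Ds2 ≤ s2 := by
    apply specNorm_diagonal_le hs2nn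
    intro j
    rw [abs_of_nonneg (hσs_nonneg _)]
    exact hσs_mono ⟨r, hr⟩ (tailIdx r j) (by simp [Fin.le_def, tailIdx])
  have hD2n : specNorm D2 ≤ t2 := by
    apply specNorm_diagonal_le ht2nn
    intro j
    rw [abs_of_nonneg (hσ_nonneg _)]
    exact hσ_mono ⟨r, hr⟩ (tailIdx r j) (by simp [Fin.le_def, tailIdx])
  have hDs1low : ∀ l : Fin r, s1 ≤ σs (Fin.castLE hr.le l) := by
    intro l
    apply hσs_mono (Fin.castLE hr.le l) ⟨r - 1, hr1⟩
    simp [Fin.le_def]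
    omega
  have hD1low : ∀ l : Fin r, t1 ≤ σ (Fin.castLE hr.le l) := by
    intro l
    apply hσ_mono (Fin.castLE hr.le l) ⟨r - 1, hr1⟩
    simp [Fin.le_def]
    omega
  -- orthonormal norm bounds
  have hU1n : specNorm U1 ≤ 1 := specNorm_orth_le hU1o
  have hU2n : specNorm U2 ≤ 1 := specNorm_orth_le hU2o
  have hU2tn : specNorm U2ᵀ ≤ 1 := specNorm_orth_tr_le hU2o
  have hUs2tn : specNorm Us2ᵀ ≤ 1 := specNorm_orth_tr_le hUs2o
  have hVs1n : specNorm Vs1 ≤ 1 := specNorm_orth_le hVs1o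
  have hVs1tn : specNorm Vs1ᵀ ≤ 1 := specNorm_orth_tr_le hVs1o
  have hVs2tn : specNorm Vs2ᵀ ≤ 1 := specNorm_orth_tr_le hVs2o
  have hV1n : specNorm V1 ≤ 1 := specNorm_orth_le hV1o
  have hV2tn : specNorm V2ᵀ ≤ 1 := specNorm_orth_tr_le hV2o
  have hUs1n : specNorm Us1 ≤ 1 := specNorm_orth_le hUs1o
  -- norms of sin-theta quantities
  set a := specNorm (U2ᵀ * Us1) with hadef
  set b := specNorm (V2ᵀ * Vs1) with hbdef
  set a' := specNorm (Us2ᵀ * U1) with ha'def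
  set b' := specNorm (Vs2ᵀ * V1) with hb'def
  have ha0 : 0 ≤ a := specNorm_nonneg _
  have hb0 : 0 ≤ b := specNorm_nonneg _
  have ha'0 : 0 ≤ a' := specNorm_nonneg _
  have hb'0 : 0 ≤ b' := specNorm_nonneg _
  -- chain 1 : system for (a, b)
  have hcA : U2ᵀ * Us1 * Ds1 = D2 * (V2ᵀ * Vs1) - U2ᵀ * E * Vs1 := by
    calc U2ᵀ * Us1 * Ds1 = U2ᵀ * (Ms * Vs1) := by rw [Matrix.mul_assoc, ← hMsVs1]
      _ = U2ᵀ * ((M - E) * Vs1) := by rw [← hMsE]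
      _ = U2ᵀ * (M * Vs1) - U2ᵀ * E * Vs1 := by
          rw [Matrix.sub_mul, Matrix.mul_sub, Matrix.mul_assoc]
      _ = D2 * (V2ᵀ * Vs1) - U2ᵀ * E * Vs1 := by
          rw [← Matrix.mul_assoc, hU2M, Matrix.mul_assoc]
  have hmidA : specNorm (U2ᵀ * Us1 * Ds1) ≤ t2 * b + e := by
    rw [hcA]
    calc specNorm (D2 * (V2ᵀ * Vs1) - U2ᵀ * E * Vs1)
        ≤ specNorm (D2 * (V2ᵀ * Vs1)) + specNorm (U2ᵀ * E * Vs1) := specNorm_sub_le _ _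
      _ ≤ t2 * b + e := add_le_add (specNorm_mul_le_of_le hD2n le_rfl hb0)
          (sandwich_le _ _ _ hU2tn hVs1n)
  have hsys1 : s1 * a ≤ t2 * b + e :=
    le_trans (specNorm_mul_diagonal_ge (U2ᵀ * Us1) hs1pos hDs1low) hmidA
  have hcB : V2ᵀ * Vs1 * Ds1 = D2 * (U2ᵀ * Us1) - V2ᵀ * Eᵀ * Us1 := by
    have h1 : Vs1 * Ds1 = Msᵀ * Us1 := by
      have := congrArg Matrix.transpose hUs1Ms
      rw [Matrix.transpose_mul, Matrix.transpose_mul, Matrix.transpose_transpose,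
        Matrix.diagonal_transpose] at this
      exact this.symm
    have h2 : V2ᵀ * Mᵀ = D2 * U2ᵀ := by
      have := congrArg Matrix.transpose hMV2
      rw [Matrix.transpose_mul, Matrix.transpose_mul, Matrix.diagonal_transpose] at this
      exact this
    calc V2ᵀ * Vs1 * Ds1 = V2ᵀ * (Msᵀ * Us1) := by rw [Matrix.mul_assoc, h1]
      _ = V2ᵀ * ((Mᵀ - Eᵀ) * Us1) := by rw [← hMstE]
      _ = V2ᵀ * (Mᵀ * Us1) - V2ᵀ * Eᵀ * Us1 := by
          rw [Matrix.sub_mul, Matrix.mul_sub, Matrix.mul_assoc]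
      _ = D2 * (U2ᵀ * Us1) - V2ᵀ * Eᵀ * Us1 := by
          rw [← Matrix.mul_assoc, h2, Matrix.mul_assoc]
  have hsys2 : s1 * b ≤ t2 * a + e := by
    refine le_trans (specNorm_mul_diagonal_ge (V2ᵀ * Vs1) hs1pos hDs1low) ?_
    rw [hcB]
    calc specNorm (D2 * (U2ᵀ * Us1) - V2ᵀ * Eᵀ * Us1)
        ≤ specNorm (D2 * (U2ᵀ * Us1)) + specNorm (V2ᵀ * Eᵀ * Us1) := specNorm_sub_le _ _
      _ ≤ t2 * a + e := by
          refine add_le_add (specNorm_mul_le_of_le hD2n le_rfl ha0) ?_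
          have := sandwich_le V2ᵀ Eᵀ Us1 hV2tn hUs1n
          rwa [specNorm_transpose] at this
  -- chain 2 : system for (a', b')
  have hcC : Us2ᵀ * U1 * D1 = Ds2 * (Vs2ᵀ * V1) + Us2ᵀ * E * V1 := by
    calc Us2ᵀ * U1 * D1 = Us2ᵀ * (M * V1) := by rw [Matrix.mul_assoc, ← hMV1]
      _ = Us2ᵀ * (Ms * V1) + Us2ᵀ * E * V1 := by
          conv_lhs => rw [hMdef]
          rw [Matrix.add_mul, Matrix.mul_add, Matrix.mul_assoc]
      _ = Ds2 * (Vs2ᵀ * V1) + Us2ᵀ * E * V1 := by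
          rw [← Matrix.mul_assoc, hUs2Ms, Matrix.mul_assoc]
  have hsys3 : t1 * a' ≤ s2 * b' + e := by
    refine le_trans (specNorm_mul_diagonal_ge (Us2ᵀ * U1) ht1pos hD1low) ?_
    rw [hcC]
    calc specNorm (Ds2 * (Vs2ᵀ * V1) + Us2ᵀ * E * V1)
        ≤ specNorm (Ds2 * (Vs2ᵀ * V1)) + specNorm (Us2ᵀ * E * V1) := specNorm_add_le _ _
      _ ≤ s2 * b' + e := add_le_add (specNorm_mul_le_of_le hDs2n le_rfl hb'0)
          (sandwich_le _ _ _ hUs2tn hV1n)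
  have hcD : Vs2ᵀ * V1 * D1 = Ds2 * (Us2ᵀ * U1) + Vs2ᵀ * Eᵀ * U1 := by
    have h1 : V1 * D1 = Mᵀ * U1 := by
      have := congrArg Matrix.transpose hU1M
      rw [Matrix.transpose_mul, Matrix.transpose_mul, Matrix.transpose_transpose,
        Matrix.diagonal_transpose] at this
      exact this.symm
    have h2 : Vs2ᵀ * Msᵀ = Ds2 * Us2ᵀ := by
      have := congrArg Matrix.transpose hMsVs2
      rw [Matrix.transpose_mul, Matrix.transpose_mul, Matrix.diagonal_transpose] at this
      exact this
    calc Vs2ᵀ * V1 * D1 = Vs2ᵀ * (Mᵀ * U1) := by rw [Matrix.mul_assoc, h1]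
      _ = Vs2ᵀ * (Msᵀ * U1) + Vs2ᵀ * Eᵀ * U1 := by
          conv_lhs => rw [hMdef, Matrix.transpose_add]
          rw [Matrix.add_mul, Matrix.mul_add, Matrix.mul_assoc]
      _ = Ds2 * (Us2ᵀ * U1) + Vs2ᵀ * Eᵀ * U1 := by
          rw [← Matrix.mul_assoc, h2, Matrix.mul_assoc]
  have hsys4 : t1 * b' ≤ s2 * a' + e := by
    refine le_trans (specNorm_mul_diagonal_ge (Vs2ᵀ * V1) ht1pos hD1low) ?_
    rw [hcD]
    calc specNorm (Ds2 * (Us2ᵀ * U1) + Vs2ᵀ * Eᵀ * U1)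
        ≤ specNorm (Ds2 * (Us2ᵀ * U1)) + specNorm (Vs2ᵀ * Eᵀ * U1) := specNorm_add_le _ _
      _ ≤ s2 * a' + e := by
          refine add_le_add (specNorm_mul_le_of_le hDs2n le_rfl ha'0) ?_
          have := sandwich_le Vs2ᵀ Eᵀ U1 hVs2tn hU1n
          rwa [specNorm_transpose] at this
  -- resolve the coupled systems
  have ht2lt : t2 < s1 := by linarith
  have hs2lt : s2 < t1 := by linarith
  have hbkey : (s1 - t2) * b ≤ e := resolve_system hsys1 hsys2 ha0 hb0 ht2nn ht2lt
  have hakey : (t1 - s2) * a' ≤ e := resolve_system hsys4 hsys3 hb'0 ha'0 hs2nn hs2lt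
  -- decomposition of the target matrix
  have hdecomp : (U1 * U1ᵀ - Us1 * Us1ᵀ) * Ms
      = U1 * (U1ᵀ * (Us2 * (Ds2 * Vs2ᵀ))) - U2 * (U2ᵀ * (Us1 * (Ds1 * Vs1ᵀ))) := by
    have hMsd : Ms = Us1 * (Us1ᵀ * Ms) + Us2 * (Us2ᵀ * Ms) := complete_split hUscomp Ms
    have h1 : U1 * (U1ᵀ * Ms)
        = U1 * (U1ᵀ * (Us1 * (Us1ᵀ * Ms))) + U1 * (U1ᵀ * (Us2 * (Us2ᵀ * Ms))) := by
      conv_lhs => rw [hMsd]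
      rw [Matrix.mul_add, Matrix.mul_add]
    have h2 : Us1 * (Us1ᵀ * Ms)
        = U1 * (U1ᵀ * (Us1 * (Us1ᵀ * Ms))) + U2 * (U2ᵀ * (Us1 * (Us1ᵀ * Ms))) :=
      complete_split hUcomp _
    have h3 : (U1 * U1ᵀ - Us1 * Us1ᵀ) * Ms = U1 * (U1ᵀ * Ms) - Us1 * (Us1ᵀ * Ms) := by
      rw [Matrix.sub_mul, Matrix.mul_assoc, Matrix.mul_assoc]
    rw [h3]
    conv_lhs => rw [h2]
    conv_lhs => rw [h1]
    rw [hUs1Ms, hUs2Ms]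
    abel
  -- final norm bound
  have hTerm1 : specNorm (U1 * (U1ᵀ * (Us2 * (Ds2 * Vs2ᵀ)))) ≤ a' * s2 := by
    have htr : specNorm (U1ᵀ * Us2) = a' := by
      rw [ha'def, ← specNorm_transpose (Us2ᵀ * U1), Matrix.transpose_mul,
        Matrix.transpose_transpose]
    have hgrp : U1ᵀ * (Us2 * (Ds2 * Vs2ᵀ)) = (U1ᵀ * Us2) * (Ds2 * Vs2ᵀ) := by
      rw [Matrix.mul_assoc]
    calc specNorm (U1 * (U1ᵀ * (Us2 * (Ds2 * Vs2ᵀ))))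
        ≤ 1 * specNorm (U1ᵀ * (Us2 * (Ds2 * Vs2ᵀ))) :=
          specNorm_mul_le_of_le hU1n le_rfl (specNorm_nonneg _)
      _ = specNorm ((U1ᵀ * Us2) * (Ds2 * Vs2ᵀ)) := by rw [one_mul, hgrp]
      _ ≤ a' * (s2 * 1) := by
          apply specNorm_mul_le_of_le (le_of_eq htr)
          · exact specNorm_mul_le_of_le hDs2n hVs2tn zero_le_one
          · positivity
      _ = a' * s2 := by ring
  have hTerm2 : specNorm (U2 * (U2ᵀ * (Us1 * (Ds1 * Vs1ᵀ)))) ≤ t2 * b + e := by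
    have hgrp : U2ᵀ * (Us1 * (Ds1 * Vs1ᵀ)) = (U2ᵀ * Us1 * Ds1) * Vs1ᵀ := by
      rw [Matrix.mul_assoc, Matrix.mul_assoc]
    have h1 : specNorm ((U2ᵀ * Us1 * Ds1) * Vs1ᵀ) ≤ (t2 * b + e) * 1 :=
      specNorm_mul_le_of_le hmidA hVs1tn zero_le_one
    calc specNorm (U2 * (U2ᵀ * (Us1 * (Ds1 * Vs1ᵀ))))
        ≤ 1 * specNorm (U2ᵀ * (Us1 * (Ds1 * Vs1ᵀ))) :=
          specNorm_mul_le_of_le hU2n le_rfl (specNorm_nonneg _)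
      _ = specNorm ((U2ᵀ * Us1 * Ds1) * Vs1ᵀ) := by rw [one_mul, hgrp]
      _ ≤ (t2 * b + e) * 1 := h1
      _ = t2 * b + e := mul_one _
  have hfinal : specNorm ((U1 * U1ᵀ - Us1 * Us1ᵀ) * Ms) ≤ 4 * s1 * e / (s1 - s2) := by
    have hN : specNorm ((U1 * U1ᵀ - Us1 * Us1ᵀ) * Ms) ≤ a' * s2 + (t2 * b + e) := by
      rw [hdecomp]
      exact le_trans (specNorm_sub_le _ _) (add_le_add hTerm1 hTerm2)
    exact final_scalar he0 hs2nn ht2nn ha'0 hb0 hgap' hw1 hw2 hbkey hakey hN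
  have hG : (Matrix.of fun a b : Fin n₁ =>
      (∑ l : Fin r, u a (Fin.castLE hr.le l) * u b (Fin.castLE hr.le l))
        - ∑ l : Fin r, us a (Fin.castLE hr.le l) * us b (Fin.castLE hr.le l))
      = U1 * U1ᵀ - Us1 * Us1ᵀ := by
    ext a b
    simp only [Matrix.of_apply, Matrix.sub_apply, Matrix.mul_apply, Matrix.transpose_apply,
      Matrix.submatrix_apply, id_eq, hU1def, hUs1def]
  rw [hG]
  exact hfinal
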